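/- For every even integer d ≥ 2 and every integer n ≥ d+1, the Gale hypergraph G(d,n) has transversal number τ(G(d,n)) = ⌈(n−d)/2⌉ + 1. -/

import Mathlib

/-- `f` is a hyperedge of the Gale hypergraph `G(d,n)`: a `d`-element subset of
`{1, …, n}` satisfying Gale's evenness condition. -/
def GaleEdge (d n : ℕ) (f : Finset ℕ) : Prop :=
  f ⊆ Finset.Icc 1 n ∧ f.card = d ∧
  ∀ i ∈ Finset.Icc 1 n, ∀ j ∈ Finset.Icc 1 n, i < j → i ∉ f → j ∉ f →
    Even ((f.filter fun x => i < x ∧ x < j).card)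

/-- The union of pairs `{p, p+1}` for `p` in a list. -/
def pset : List ℕ → Finset ℕ
  | [] => ∅
  | p :: L => insert p (insert (p+1) (pset L))

lemma mem_pset {y : ℕ} : ∀ {L : List ℕ}, y ∈ pset L ↔ ∃ p ∈ L, y = p ∨ y = p + 1
  | [] => by simp [pset]
  | p :: L => by
    simp [pset, @mem_pset y L]
    aesop

lemma pset_card : ∀ {L : List ℕ}, L.Pairwise (fun p q => q + 2 ≤ p) →
    (pset L).card = 2 * L.length
  | [] => by simp [pset]
  | p :: L => by
    intro hpw
    rw [List.pairwise_cons] at hpw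
    have h1 : p + 1 ∉ pset L := by
      intro h
      rcases mem_pset.1 h with ⟨q, hq, hy⟩
      have := hpw.1 q hq
      omega
    have h2 : p ∉ insert (p+1) (pset L) := by
      simp only [Finset.mem_insert]
      rintro (h | h)
      · omega
      · rcases mem_pset.1 h with ⟨q, hq, hy⟩
        have := hpw.1 q hq
        omega
    rw [pset, Finset.card_insert_of_notMem h2, Finset.card_insert_of_notMem h1,
      pset_card hpw.2]
    simp [List.length_cons]
    ring

lemma pset_filter_even (i j : ℕ) : ∀ L : List ℕ, L.Pairwise (fun p q => q + 2 ≤ p) →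
    (∀ p ∈ L, p ≠ i ∧ p ≠ j ∧ p + 1 ≠ i ∧ p + 1 ≠ j) →
    Even (((pset L).filter fun y => i < y ∧ y < j).card)
  | [] => by simp [pset]
  | p :: L => by
    intro hpw hne
    rw [List.pairwise_cons] at hpw
    have hne' := hne p (by simp)
    have hrec := pset_filter_even i j L hpw.2 (fun q hq => hne q (by simp [hq]))
    have h1 : p + 1 ∉ pset L := by
      intro h
      rcases mem_pset.1 h with ⟨q, hq, hy⟩
      have := hpw.1 q hq
      omega
    have h2 : p ∉ pset L := by
      intro h
      rcases mem_pset.1 h with ⟨q, hq, hy⟩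
      have := hpw.1 q hq
      omega
    rw [pset, Finset.filter_insert, Finset.filter_insert]
    by_cases hc : i < p ∧ p < j
    · have hc1 : i < p + 1 ∧ p + 1 < j := by omega
      rw [if_pos hc, if_pos hc1]
      have m1 : p + 1 ∉ (pset L).filter (fun y => i < y ∧ y < j) := by
        simp only [Finset.mem_filter]; tauto
      have m2 : p ∉ insert (p+1) ((pset L).filter (fun y => i < y ∧ y < j)) := by
        simp only [Finset.mem_insert, Finset.mem_filter]
        rintro (h | ⟨h, _⟩) <;> [omega; exact h2 h]
      rw [Finset.card_insert_of_notMem m2, Finset.card_insert_of_notMem m1]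
      rcases hrec with ⟨c, hc⟩
      exact ⟨c + 1, by omega⟩
    · have hc1 : ¬(i < p + 1 ∧ p + 1 < j) := by omega
      rw [if_neg hc, if_neg hc1]
      exact hrec

lemma galeStruct (n α σ : ℕ) (L : List ℕ)
    (hpw : L.Pairwise fun p q => q + 2 ≤ p)
    (hp : ∀ p ∈ L, α < p ∧ p + 1 + σ ≤ n)
    (hασ : α + σ ≤ n) :
    GaleEdge (α + 2 * L.length + σ) n
      (Finset.Icc 1 α ∪ pset L ∪ Finset.Icc (n + 1 - σ) n) := by
  set f := Finset.Icc 1 α ∪ pset L ∪ Finset.Icc (n + 1 - σ) n with hf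
  have hmem : ∀ y, y ∈ f ↔ ((1 ≤ y ∧ y ≤ α) ∨ (∃ p ∈ L, y = p ∨ y = p + 1)
      ∨ (n + 1 - σ ≤ y ∧ y ≤ n)) := by
    intro y
    simp [hf, Finset.mem_union, Finset.mem_Icc, mem_pset, or_assoc]
  have hsub : f ⊆ Finset.Icc 1 n := by
    intro y hy
    rw [hmem] at hy
    rw [Finset.mem_Icc]
    rcases hy with h | ⟨p, hpL, h⟩ | h
    · omega
    · have := hp p hpL; omega
    · omega
  refine ⟨hsub, ?_, ?_⟩
  · -- cardinality
    have d1 : Disjoint (Finset.Icc 1 α) (pset L) := by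
      rw [Finset.disjoint_left]
      intro y hy hy'
      rw [Finset.mem_Icc] at hy
      rcases mem_pset.1 hy' with ⟨p, hpL, h⟩
      have := hp p hpL; omega
    have d2 : Disjoint (Finset.Icc 1 α ∪ pset L) (Finset.Icc (n + 1 - σ) n) := by
      rw [Finset.disjoint_left]
      intro y hy hy'
      rw [Finset.mem_Icc] at hy'
      rcases Finset.mem_union.1 hy with h | h
      · rw [Finset.mem_Icc] at h; omega
      · rcases mem_pset.1 h with ⟨p, hpL, h⟩
        have := hp p hpL; omega
    rw [hf, Finset.card_union_of_disjoint d2, Finset.card_union_of_disjoint d1,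
      pset_card hpw, Nat.card_Icc, Nat.card_Icc]
    omega
  · -- evenness
    intro i hi j hj hij hif hjf
    rw [Finset.mem_Icc] at hi hj
    have hiα : ¬(1 ≤ i ∧ i ≤ α) := fun h => hif (by rw [hmem]; exact Or.inl h)
    have hjσ : ¬(n + 1 - σ ≤ j ∧ j ≤ n) := fun h => hjf (by rw [hmem]; exact Or.inr (Or.inr h))
    have hfi : f.filter (fun y => i < y ∧ y < j)
        = (pset L).filter (fun y => i < y ∧ y < j) := by
      apply Finset.ext
      intro y
      simp only [Finset.mem_filter]
      constructor
      · rintro ⟨hy, h1, h2⟩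
        rw [hmem] at hy
        rcases hy with h | h | h
        · omega
        · exact ⟨mem_pset.2 h, h1, h2⟩
        · omega
      · rintro ⟨hy, h1, h2⟩
        exact ⟨by rw [hmem]; exact Or.inr (Or.inl (mem_pset.1 hy)), h1, h2⟩
    rw [hfi]
    apply pset_filter_even i j L hpw
    intro p hpL
    have hpf : p ∈ f := by rw [hmem]; exact Or.inr (Or.inl ⟨p, hpL, Or.inl rfl⟩)
    have hpf1 : p + 1 ∈ f := by rw [hmem]; exact Or.inr (Or.inl ⟨p, hpL, Or.inr rfl⟩)
    exact ⟨fun h => hif (h ▸ hpf), fun h => hjf (h ▸ hpf),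
      fun h => hif (h ▸ hpf1), fun h => hjf (h ▸ hpf1)⟩

/-- Capacity lemma: in `[1,nn]` avoiding `T`, we can find a prefix run of length `a`
and a family of disjoint adjacent pairs, with total capacity at least
`nn + [nn ∈ T] - 2|T|`. -/
lemma lemA : ∀ nn (T : Finset ℕ), T ⊆ Finset.Icc 1 nn →
    ∃ (a : ℕ) (L : List ℕ), a ≤ nn ∧ (∀ i, 1 ≤ i → i ≤ a → i ∉ T) ∧
      L.Pairwise (fun p q => q + 2 ≤ p) ∧
      (∀ p ∈ L, a < p ∧ p + 1 ≤ nn ∧ p ∉ T ∧ p + 1 ∉ T) ∧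
      nn + (if nn ∈ T then 1 else 0) ≤ a + 2 * L.length + 2 * T.card := by
  intro nn
  induction nn using Nat.strong_induction_on with
  | _ nn IH =>
    intro T hT
    by_cases hTe : T = ∅
    · subst hTe
      exact ⟨nn, [], le_refl _, by simp, by simp, by simp, by simp⟩
    have hne : T.Nonempty := Finset.nonempty_iff_ne_empty.2 hTe
    have hnn1 : 1 ≤ nn := by
      obtain ⟨x, hx⟩ := hne
      have := hT hx
      rw [Finset.mem_Icc] at this
      omega
    by_cases h1 : nn ∈ T
    · -- remove nn
      obtain ⟨a, L, ha, hpre, hpw, hp, hbd⟩ := IH (nn - 1) (by omega) (T.erase nn) (by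
        intro x hx
        rw [Finset.mem_erase] at hx
        have := hT hx.2
        rw [Finset.mem_Icc] at this ⊢
        omega)
      have hcard : (T.erase nn).card + 1 = T.card := Finset.card_erase_add_one h1
      refine ⟨a, L, by omega, ?_, hpw, ?_, ?_⟩
      · intro i h1i h2i hiT
        exact hpre i h1i h2i (Finset.mem_erase.2 ⟨by omega, hiT⟩)
      · intro p hpL
        obtain ⟨g1, g2, g3, g4⟩ := hp p hpL
        refine ⟨g1, by omega, ?_, ?_⟩
        · intro h; exact g3 (Finset.mem_erase.2 ⟨by omega, h⟩)
        · intro h; exact g4 (Finset.mem_erase.2 ⟨by omega, h⟩)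
      · split <;> omega
    · -- nn ∉ T
      have hnn2 : 2 ≤ nn := by
        rcases Nat.lt_or_ge nn 2 with h | h
        · obtain ⟨x, hx⟩ := hne
          have := hT hx
          rw [Finset.mem_Icc] at this
          have : x = nn := by omega
          subst this; exact absurd hx h1
        · exact h
      by_cases h2 : nn - 1 ∈ T
      · obtain ⟨a, L, ha, hpre, hpw, hp, hbd⟩ := IH (nn - 1) (by omega) T (by
          intro x hx
          have := hT hx
          rw [Finset.mem_Icc] at this ⊢
          have : x ≠ nn := fun h => h1 (h ▸ hx)
          omega)
        refine ⟨a, L, by omega, hpre, hpw, fun p hpL => ?_, ?_⟩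
        · obtain ⟨g1, g2, g3, g4⟩ := hp p hpL
          exact ⟨g1, by omega, g3, g4⟩
        · rw [if_neg h1]
          rw [if_pos h2] at hbd
          omega
      · -- both nn, nn-1 free: add pair (nn-1, nn)
        obtain ⟨a, L, ha, hpre, hpw, hp, hbd⟩ := IH (nn - 2) (by omega) T (by
          intro x hx
          have := hT hx
          rw [Finset.mem_Icc] at this ⊢
          have hx1 : x ≠ nn := fun h => h1 (h ▸ hx)
          have hx2 : x ≠ nn - 1 := fun h => h2 (h ▸ hx)
          omega)
        refine ⟨a, (nn - 1) :: L, by omega, hpre, ?_, ?_, ?_⟩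
        · rw [List.pairwise_cons]
          exact ⟨fun q hq => by have := (hp q hq).2.1; omega, hpw⟩
        · intro p hpL
          rcases List.mem_cons.1 hpL with h | h
          · subst h
            refine ⟨by omega, by omega, h2, ?_⟩
            have : nn - 1 + 1 = nn := by omega
            rw [this]; exact h1
          · obtain ⟨g1, g2, g3, g4⟩ := hp p h
            exact ⟨g1, by omega, g3, g4⟩
        · rw [if_neg h1]
          simp only [List.length_cons]
          split at hbd <;> omega

lemma lemC (d n : ℕ) (hd2 : 2 ≤ d) (heven : Even d) (hn : d + 1 ≤ n)
    (T : Finset ℕ) (hT : T ⊆ Finset.Icc 1 n) (hcard : 2 * T.card + d ≤ n + 1) :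
    ∃ f, GaleEdge d n f ∧ ∀ v ∈ f, v ∉ T := by
  by_cases hTe : T = ∅
  · subst hTe
    have h := galeStruct n d 0 [] (by simp) (by simp) (by omega)
    simp only [List.length_nil, mul_zero, add_zero] at h
    refine ⟨_, h, by simp⟩
  have hne : T.Nonempty := Finset.nonempty_iff_ne_empty.2 hTe
  set x := T.max' hne with hxdef
  have hxT : x ∈ T := T.max'_mem hne
  have hxIcc := hT hxT
  rw [Finset.mem_Icc] at hxIcc
  have hxmax : ∀ v ∈ T, v ≤ x := fun v hv => T.le_max' v hv
  obtain ⟨a, L, ha, hpre, hpw, hp, hbd⟩ := lemA x T (by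
    intro v hv
    have := hT hv
    rw [Finset.mem_Icc] at this ⊢
    exact ⟨this.1, hxmax v hv⟩)
  rw [if_pos hxT] at hbd
  set s := n - x with hs
  set m := L.length with hm
  obtain ⟨e, he⟩ := heven
  -- choose k pairs, prefix α, suffix σ
  set k := min m e with hk
  set α := min a (d - 2 * k) with hα
  set σ := d - 2 * k - α with hσ
  have hcap : d ≤ a + 2 * m + s := by omega
  have hkm : k ≤ m := min_le_left _ _
  have hke : k ≤ e := min_le_right _ _
  have hkk : k = m ∨ k = e := by omega
  have haa : α ≤ a := min_le_left _ _
  have had : α ≤ d - 2 * k := min_le_right _ _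
  have hαα : α = a ∨ α = d - 2 * k := by omega
  have hσs : σ ≤ s := by
    rcases hkk with h | h <;> rcases hαα with h' | h' <;> omega
  have hsum : α + 2 * k + σ = d := by omega
  have htk : (L.take k).length = k := by
    rw [List.length_take]; omega
  have hpwt : (L.take k).Pairwise (fun p q => q + 2 ≤ p) :=
    hpw.sublist (List.take_sublist k L)
  have hpt : ∀ p ∈ L.take k, α < p ∧ p + 1 + σ ≤ n := by
    intro p hpL
    have hpL' := List.mem_of_mem_take hpL
    obtain ⟨g1, g2, g3, g4⟩ := hp p hpL'
    constructor
    · omega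
    · omega
  have hg := galeStruct n α σ (L.take k) hpwt hpt (by omega)
  rw [htk, hsum] at hg
  refine ⟨_, hg, ?_⟩
  intro v hv
  rcases Finset.mem_union.1 hv with hv | hv
  · rcases Finset.mem_union.1 hv with hv | hv
    · rw [Finset.mem_Icc] at hv
      exact hpre v hv.1 (by omega)
    · rcases mem_pset.1 hv with ⟨p, hpL, hy⟩
      obtain ⟨g1, g2, g3, g4⟩ := hp p (List.mem_of_mem_take hpL)
      rcases hy with rfl | rfl <;> assumption
  · rw [Finset.mem_Icc] at hv
    intro hvT
    have := hxmax v hvT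
    omega

lemma upperT (d n : ℕ) (hd : 2 ≤ d) (heven : Even d) (hn : d + 1 ≤ n) :
    ∃ T ⊆ Finset.Icc 1 n,
      (∀ f, GaleEdge d n f → ∃ v ∈ f, v ∈ T) ∧ T.card = (n - d + 1) / 2 + 1 := by
  set M := (n - d) / 2 + 1 with hM
  set T := insert n ((Finset.range M).image (fun i => d + 2 * i)) with hTdef
  have hmemT : ∀ y, y ∈ T ↔ y = n ∨ ∃ i < M, y = d + 2 * i := by
    intro y
    simp [hTdef, Finset.mem_insert, Finset.mem_image, Finset.mem_range, eq_comm]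
  refine ⟨T, ?_, ?_, ?_⟩
  · intro y hy
    rw [hmemT] at hy
    rw [Finset.mem_Icc]
    rcases hy with rfl | ⟨i, hi, rfl⟩
    · omega
    · -- d + 2i ≤ n since i ≤ (n-d)/2
      have : 2 * ((n - d) / 2) ≤ n - d := by omega
      omega
  · -- transversal property
    intro f hf
    obtain ⟨hsub, hcard, hgale⟩ := hf
    by_contra hcon
    push_neg at hcon
    -- there is x ∈ f with d ≤ x
    have hex : ∃ x ∈ f, d ≤ x := by
      by_contra h
      push_neg at h
      have : f ⊆ Finset.Icc 1 (d - 1) := by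
        intro y hy
        have h1 := hsub hy
        rw [Finset.mem_Icc] at h1 ⊢
        have := h y hy
        omega
      have := Finset.card_le_card this
      rw [hcard, Nat.card_Icc] at this
      omega
    obtain ⟨x, hxf, hxd⟩ := hex
    have hxT := hcon x hxf
    rw [hmemT] at hxT
    push_neg at hxT
    have hxn : x ≠ n := hxT.1
    have hxle : x ≤ n := by
      have := hsub hxf; rw [Finset.mem_Icc] at this; omega
    -- x - d is odd
    have hodd : ¬ Even (x - d) := by
      intro ⟨c, hc⟩
      exact hxT.2 c (by omega) (by omega)
    have hxd1 : d + 1 ≤ x := by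
      rcases Nat.eq_or_lt_of_le hxd with h | h
      · exfalso; exact hodd ⟨0, by omega⟩
      · omega
    obtain ⟨c0, hc0⟩ : Odd (x - d) := Nat.not_even_iff_odd.1 hodd
    -- x - 1 and x + 1 are in T hence not in f
    have hdiv : ∀ y, d ≤ y → y ≤ n → Even (y - d) → y ∈ T := by
      intro y h1 h2 ⟨c, hc⟩
      rw [hmemT]
      right
      exact ⟨c, by omega, by omega⟩
    have hm1 : x - 1 ∈ T := hdiv (x - 1) (by omega) (by omega) ⟨c0, by omega⟩
    have hp1 : x + 1 ∈ T := hdiv (x + 1) (by omega) (by omega) ⟨c0 + 1, by omega⟩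
    have hm1f : x - 1 ∉ f := fun h => (hcon _ h) hm1
    have hp1f : x + 1 ∉ f := by
      intro h
      exact (hcon _ h) hp1
    have hxn1 : x + 1 ≤ n := by omega
    have heven1 := hgale (x - 1) (by rw [Finset.mem_Icc]; omega)
      (x + 1) (by rw [Finset.mem_Icc]; omega) (by omega) hm1f hp1f
    have : f.filter (fun y => x - 1 < y ∧ y < x + 1) = {x} := by
      apply Finset.ext
      intro y
      simp only [Finset.mem_filter, Finset.mem_singleton]
      constructor
      · rintro ⟨hy, h1, h2⟩; omega
      · rintro rfl; exact ⟨hxf, by omega, by omega⟩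
    rw [this, Finset.card_singleton] at heven1
    exact (Nat.not_even_one) heven1
  · -- cardinality
    have hinj : Set.InjOn (fun i => d + 2 * i) (Finset.range M) := by
      intro i _ j _ h
      simp only at h
      omega
    have himg : ((Finset.range M).image (fun i => d + 2 * i)).card = M :=
      (Finset.card_image_of_injOn hinj).trans (by simp)
    by_cases hpar : Even (n - d)
    · have hnin : n ∈ (Finset.range M).image (fun i => d + 2 * i) := by
        obtain ⟨c, hc⟩ := hpar
        simp only [Finset.mem_image, Finset.mem_range]
        refine ⟨c, by omega, by omega⟩
      rw [hTdef, Finset.insert_eq_self.2 hnin, himg]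
      obtain ⟨c, hc⟩ := hpar
      omega
    · have hnin : n ∉ (Finset.range M).image (fun i => d + 2 * i) := by
        simp only [Finset.mem_image, Finset.mem_range]
        rintro ⟨i, hi, h⟩
        exact hpar ⟨i, by omega⟩
      rw [hTdef, Finset.card_insert_of_notMem hnin, himg]
      have : ¬ Even (n - d) := hpar
      rcases Nat.even_or_odd (n - d) with h | h
      · exact absurd h hpar
      · obtain ⟨c, hc⟩ := h
        omega

/-- For even `d ≥ 2` and `n ≥ d+1`, the Gale hypergraph `G(d,n)` has
transversal number `⌈(n-d)/2⌉ + 1`. -/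
theorem gale_even_transversal_number
    (d n : ℕ) (hd : 2 ≤ d) (heven : Even d) (hn : d + 1 ≤ n) :
    IsLeast {m : ℕ | ∃ T ⊆ Finset.Icc 1 n,
        (∀ f, GaleEdge d n f → ∃ v ∈ f, v ∈ T) ∧ T.card = m}
      ((n - d + 1) / 2 + 1) := by
  constructor
  · obtain ⟨T, h1, h2, h3⟩ := upperT d n hd heven hn
    exact ⟨T, h1, h2, h3⟩
  · rintro m ⟨T, hTsub, htrans, hcard⟩
    by_contra hlt
    push_neg at hlt
    have hm : m ≤ (n - d + 1) / 2 := by omega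
    have h2m : 2 * m ≤ n - d + 1 := by
      omega
    have hbc : 2 * T.card + d ≤ n + 1 := by omega
    obtain ⟨f, hgale, havoid⟩ := lemC d n hd heven hn T hTsub hbc
    obtain ⟨v, hvf, hvT⟩ := htrans f hgale
    exact havoid v hvf hvT
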